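/- Let h : ℝ → ℝ be continuous with H(t) = ∫₀ᵗ h(r) dr, and suppose there is θ > 2 such that 0 < θ H(t) ≤ h(t) t for all t ≠ 0. Then there exists c > 0 such that H(t) ≥ c·|t|^θ for all |t| ≥ 1. -/

import Mathlib

open Real Set

private lemma aux_mono (H g : ℝ → ℝ) (θ : ℝ) (hθ : 0 < θ)
    (hd : ∀ t : ℝ, HasDerivAt H (g t) t)
    (hAR : ∀ t : ℝ, 1 ≤ t → θ * H t ≤ g t * t) :
    ∀ t : ℝ, 1 ≤ t → H 1 * t ^ θ ≤ H t := by
  set F : ℝ → ℝ := fun t => H t * t ^ (-θ) with hF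
  have hFd : ∀ t : ℝ, 0 < t →
      HasDerivAt F (g t * t ^ (-θ) + H t * (-θ * t ^ (-θ - 1))) t := fun t ht =>
    (hd t).mul (Real.hasDerivAt_rpow_const (Or.inl ht.ne'))
  have hmono : MonotoneOn F (Ici (1 : ℝ)) := by
    apply monotoneOn_of_deriv_nonneg (convex_Ici 1)
    · exact fun t ht => (hFd t (lt_of_lt_of_le one_pos ht)).continuousAt.continuousWithinAt
    · intro t ht
      rw [interior_Ici] at ht
      exact (hFd t (lt_trans one_pos ht)).differentiableAt.differentiableWithinAt
    · intro t ht
      rw [interior_Ici] at ht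
      have ht0 : (0 : ℝ) < t := lt_trans one_pos ht
      rw [(hFd t ht0).deriv]
      have key : g t * t ^ (-θ) + H t * (-θ * t ^ (-θ - 1))
          = t ^ (-θ - 1) * (g t * t - θ * H t) := by
        have : t ^ (-θ) = t ^ (-θ - 1) * t := by
          rw [← Real.rpow_add_one ht0.ne']; ring_nf
        rw [this]; ring
      rw [key]
      exact mul_nonneg (Real.rpow_pos_of_pos ht0 _).le
        (sub_nonneg.2 (hAR t ht.le))
  intro t ht
  have h1 : F 1 ≤ F t := hmono (Set.mem_Ici.2 le_rfl) ht ht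
  have ht0 : (0 : ℝ) < t := lt_of_lt_of_le one_pos ht
  have hpow : (0 : ℝ) < t ^ θ := Real.rpow_pos_of_pos ht0 _
  simp only [hF, Real.one_rpow, mul_one] at h1
  calc H 1 * t ^ θ ≤ (H t * t ^ (-θ)) * t ^ θ := by
        exact mul_le_mul_of_nonneg_right h1 hpow.le
    _ = H t := by
        rw [mul_assoc, ← Real.rpow_add ht0]
        simp

theorem stmt_2 (h : ℝ → ℝ) (H : ℝ → ℝ) (θ : ℝ)
    (hc : Continuous h)
    (hH : ∀ t : ℝ, H t = ∫ r in (0 : ℝ)..t, h r)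
    (hθ : 2 < θ)
    (hAR : ∀ t : ℝ, t ≠ 0 → 0 < θ * H t ∧ θ * H t ≤ h t * t) :
    ∃ c : ℝ, 0 < c ∧ ∀ t : ℝ, 1 ≤ |t| → c * |t| ^ θ ≤ H t := by
  have hθ0 : (0 : ℝ) < θ := lt_trans two_pos hθ
  have hHfun : H = fun u => ∫ r in (0 : ℝ)..u, h r := funext hH
  have hd : ∀ t : ℝ, HasDerivAt H (h t) t := by
    intro t
    rw [hHfun]
    exact (hc.integral_hasStrictDerivAt 0 t).hasDerivAt
  -- positive side
  have hpos : ∀ t : ℝ, 1 ≤ t → H 1 * t ^ θ ≤ H t :=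
    aux_mono H h θ hθ0 hd (fun t ht => (hAR t (by linarith)).2)
  -- negative side: K t = H (-t)
  have hdK : ∀ t : ℝ, HasDerivAt (fun u => H (-u)) (-h (-t)) t := by
    intro t
    have := (hd (-t)).comp t (hasDerivAt_neg t)
    simpa [mul_comm, Function.comp_def] using this
  have hneg : ∀ t : ℝ, 1 ≤ t → H (-1) * t ^ θ ≤ H (-t) := by
    have := aux_mono (fun u => H (-u)) (fun u => -h (-u)) θ hθ0 hdK ?_
    · simpa using this
    · intro t ht
      have := (hAR (-t) (by intro hcon; simp at hcon; linarith)).2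
      nlinarith
  have hH1 : 0 < H 1 := by
    have := (hAR 1 one_ne_zero).1; nlinarith
  have hHm1 : 0 < H (-1) := by
    have := (hAR (-1) (by norm_num)).1; nlinarith
  refine ⟨min (H 1) (H (-1)), lt_min hH1 hHm1, ?_⟩
  intro t ht
  have hpowpos : (0 : ℝ) < |t| ^ θ := Real.rpow_pos_of_pos (by linarith) _
  rcases le_or_gt 0 t with h0 | h0
  · have habs : |t| = t := abs_of_nonneg h0
    rw [habs] at ht ⊢
    calc min (H 1) (H (-1)) * t ^ θ ≤ H 1 * t ^ θ :=
          mul_le_mul_of_nonneg_right (min_le_left _ _) (by positivity)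
      _ ≤ H t := hpos t ht
  · have habs : |t| = -t := abs_of_neg h0
    rw [habs] at ht ⊢
    calc min (H 1) (H (-1)) * (-t) ^ θ ≤ H (-1) * (-t) ^ θ :=
          mul_le_mul_of_nonneg_right (min_le_right _ _) (by positivity)
      _ ≤ H (- -t) := hneg (-t) ht
      _ = H t := by rw [neg_neg]
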